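/- Let G be a finite simple connected prime graph with at least 3 vertices, and let x be a vertex of G. Then there exists an extremity y of G such that d(x,y) = e(x). -/

import Mathlib

variable {V : Type*}

/-- The closed neighbourhood `N[v]` of a vertex. -/
def closedNbhd (G : SimpleGraph V) (v : V) : Set V := insert v (G.neighborSet v)

/-- `N[S] = ⋃_{v ∈ S} N[v]`. -/
def closedNbhdSet (G : SimpleGraph V) (S : Set V) : Set V := ⋃ v ∈ S, closedNbhd G v

/-- A vertex `v` is an extremity if the subgraph induced on `V \ N[v]` is
connected (possibly empty). -/
def IsExtremity (G : SimpleGraph V) (v : V) : Prop :=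
  (G.induce (closedNbhd G v)ᶜ).Preconnected

/-- `M` is a module: every vertex outside `M` is adjacent to all of `M` or none of `M`. -/
def IsModuleSet (G : SimpleGraph V) (M : Set V) : Prop :=
  ∀ z ∉ M, ∀ x ∈ M, ∀ y ∈ M, (G.Adj z x ↔ G.Adj z y)

/-- A graph is prime if its only modules are `∅`, `V` and the singletons. -/
def IsPrimeGraph (G : SimpleGraph V) : Prop :=
  ∀ M : Set V, IsModuleSet G M → M = ∅ ∨ M = Set.univ ∨ ∃ v, M = {v}

/-- Eccentricity of a vertex in a finite graph. -/
noncomputable def ecc [Fintype V] (G : SimpleGraph V) (u : V) : ℕ :=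
  Finset.univ.sup (G.dist u)

/-- Diameter of a finite graph. -/
noncomputable def gdiam [Fintype V] (G : SimpleGraph V) : ℕ :=
  Finset.univ.sup fun u => ecc G u

/-- `u ⊥_w v`: vertices `u` and `v` lie in different connected components of the
subgraph induced on `V \ N[w]`. -/
def Perp (G : SimpleGraph V) (w u v : V) : Prop :=
  u ∉ closedNbhd G w ∧ v ∉ closedNbhd G w ∧
    ¬ ∃ p : G.Walk u v, ∀ z ∈ p.support, z ∉ closedNbhd G w

/-- `S` is `u`-transitive: for every `x ∈ S` and vertex `y` distinct from and
nonadjacent to `x`, `x ⊥_y u` implies `y ∈ S`. -/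
def UTransitive (G : SimpleGraph V) (u : V) (S : Set V) : Prop :=
  ∀ x ∈ S, ∀ y : V, y ≠ x → ¬ G.Adj x y → Perp G y x u → y ∈ S

/-- `S` is a dominating set: every vertex lies in `N[S]`. -/
def IsDominatingSet (G : SimpleGraph V) (S : Set V) : Prop :=
  ∀ v : V, ∃ s ∈ S, v ∈ closedNbhd G s

/-- `D` is a dominating target: every superset of `D` inducing a connected
subgraph is a dominating set. -/
def IsDomTarget (G : SimpleGraph V) (D : Set V) : Prop :=
  ∀ S : Set V, D ⊆ S → (G.induce S).Connected → IsDominatingSet G S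

/-- An asteroidal set: an independent set `A` such that for every `a ∈ A`, all
vertices of `A \ {a}` lie in a single connected component of the subgraph
induced on `V \ N[a]`. -/
def IsAsteroidalSet (G : SimpleGraph V) (A : Set V) : Prop :=
  (A.Pairwise fun x y => ¬ G.Adj x y) ∧
  ∀ a ∈ A, ∀ b ∈ A, ∀ c ∈ A, b ≠ a → c ≠ a →
    ∃ p : G.Walk b c, ∀ z ∈ p.support, z ∉ closedNbhd G a

section Aux

open SimpleGraph

variable {V : Type*} {G : SimpleGraph V} {x y z u v w : V}

/-- Vertices reachable from `x` by a walk avoiding `N[y]`. -/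
def BSet (G : SimpleGraph V) (x y : V) : Set V :=
  {v | ∃ p : G.Walk x v, ∀ z ∈ p.support, z ∉ closedNbhd G y}

lemma mem_closedNbhd_self (G : SimpleGraph V) (y : V) : y ∈ closedNbhd G y :=
  Set.mem_insert _ _

lemma mem_closedNbhd_of_adj (h : G.Adj y v) : v ∈ closedNbhd G y :=
  Set.mem_insert_of_mem _ h

lemma mem_closedNbhd_iff : v ∈ closedNbhd G y ↔ v = y ∨ G.Adj y v := by
  simp [closedNbhd]

lemma bset_not_nbhd (h : v ∈ BSet G x y) : v ∉ closedNbhd G y := by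
  obtain ⟨p, hp⟩ := h
  exact hp v p.end_mem_support

lemma bset_support [DecidableEq V] {p : G.Walk x v}
    (hp : ∀ z ∈ p.support, z ∉ closedNbhd G y) (hu : u ∈ p.support) :
    u ∈ BSet G x y :=
  ⟨p.takeUntil u hu, fun z hz => hp z (p.support_takeUntil_subset hu hz)⟩

lemma bset_extend (hu : u ∈ BSet G x y) (ha : G.Adj u w)
    (hw : w ∉ closedNbhd G y) : w ∈ BSet G x y := by
  obtain ⟨p, hp⟩ := hu
  refine ⟨p.concat ha, fun z hz => ?_⟩
  rw [SimpleGraph.Walk.support_concat, List.mem_append] at hz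
  rcases hz with hz | hz
  · exact hp z hz
  · simp only [List.mem_singleton] at hz; subst hz; exact hw

lemma dist_lb (hG : G.Connected) (hz1 : z ∉ closedNbhd G y)
    (hz2 : z ∉ BSet G x y) : G.dist x y ≤ G.dist x z := by
  classical
  obtain ⟨p, hp⟩ := (hG x z).exists_walk_length_eq_dist
  have hw : ∃ w ∈ p.support, w ∈ closedNbhd G y := by
    by_contra h
    push_neg at h
    exact hz2 ⟨p, h⟩
  obtain ⟨w, hwsup, hw⟩ := hw
  have hsplit : G.dist x w + G.dist w z ≤ G.dist x z := by
    have hlen := congr_arg SimpleGraph.Walk.length (p.take_spec hwsup)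
    rw [SimpleGraph.Walk.length_append] at hlen
    calc G.dist x w + G.dist w z
        ≤ (p.takeUntil w hwsup).length + (p.dropUntil w hwsup).length :=
          Nat.add_le_add (SimpleGraph.dist_le _) (SimpleGraph.dist_le _)
      _ = p.length := hlen
      _ = G.dist x z := hp
  rcases mem_closedNbhd_iff.mp hw with h | h
  · subst h
    exact le_trans (Nat.le_add_right _ _) hsplit
  · have h1 : G.dist x y ≤ G.dist x w + 1 := by
      have hwy : G.dist w y ≤ 1 :=
        SimpleGraph.dist_le (SimpleGraph.Walk.cons h.symm SimpleGraph.Walk.nil)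
      calc G.dist x y ≤ G.dist x w + G.dist w y := hG.dist_triangle
        _ ≤ G.dist x w + 1 := Nat.add_le_add_left hwy _
    have h2 : 1 ≤ G.dist w z := by
      have hne : w ≠ z := fun e => hz1 (e ▸ mem_closedNbhd_of_adj h)
      exact hG.pos_dist_of_ne hne
    calc G.dist x y ≤ G.dist x w + 1 := h1
      _ ≤ G.dist x w + G.dist w z := Nat.add_le_add_left h2 _
      _ ≤ G.dist x z := hsplit

lemma bset_mono (hzn : z ∉ closedNbhd G y) (hzb : z ∉ BSet G x y) :
    BSet G x y ⊆ BSet G x z := by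
  classical
  rintro v ⟨p, hp⟩
  refine ⟨p, fun u hu hcn => ?_⟩
  have hub : u ∈ BSet G x y := bset_support hp hu
  rcases mem_closedNbhd_iff.mp hcn with h | h
  · exact hzb (h ▸ hub)
  · exact hzb (bset_extend hub h.symm hzn)

lemma induce_reachable {s : Set V} :
    ∀ {a b : V} (q : G.Walk a b), (∀ z ∈ q.support, z ∈ s) →
      ∀ (ha : a ∈ s) (hb : b ∈ s), (G.induce s).Reachable ⟨a, ha⟩ ⟨b, hb⟩ := by
  intro a b q
  induction q with
  | nil => intro _ ha hb; rfl
  | @cons a c b h p ih =>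
    intro hsup ha hb
    have hc : c ∈ s := hsup c (by simp [SimpleGraph.Walk.support_cons])
    have h1 : (G.induce s).Adj ⟨a, ha⟩ ⟨c, hc⟩ := h
    exact (SimpleGraph.Adj.reachable h1).trans
      (ih (fun z hz => hsup z (by simp [SimpleGraph.Walk.support_cons, hz])) hc hb)

end Aux


theorem stmt_1 [Fintype V] (G : SimpleGraph V) (hG : G.Connected)
    (hprime : IsPrimeGraph G) (hcard : 3 ≤ Fintype.card V) (x : V) :
    ∃ y : V, IsExtremity G y ∧ G.dist x y = ecc G x := by
  classical
  set k := ecc G x with hk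
  have hdistle : ∀ v, G.dist x v ≤ k := fun v => Finset.le_sup (Finset.mem_univ v)
  -- two distinct vertices different from x
  have htwo : ∃ a b : V, a ≠ x ∧ b ≠ x ∧ a ≠ b := by
    have hcard' : 1 < (Finset.univ.erase x).card := by
      rw [Finset.card_erase_of_mem (Finset.mem_univ x), Finset.card_univ]
      omega
    obtain ⟨a, ha, b, hb, hab⟩ := Finset.one_lt_card.mp hcard'
    exact ⟨a, b, Finset.ne_of_mem_erase ha, Finset.ne_of_mem_erase hb, hab⟩
  -- the eccentricity is at least 2
  have hk2 : 2 ≤ k := by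
    by_contra h
    push_neg at h
    have hadj : ∀ c : V, c ≠ x → G.Adj x c := by
      intro c hc
      have h1 : G.dist x c ≤ 1 := le_trans (hdistle c) (by omega)
      have h0 : G.dist x c ≠ 0 := by
        rw [ne_eq, hG.dist_eq_zero_iff]; exact fun e => hc e.symm
      have : G.dist x c = 1 := by omega
      exact SimpleGraph.dist_eq_one_iff_adj.mp this
    have hmod : IsModuleSet G {x}ᶜ := by
      intro z hz a ha b hb
      have hz' : z = x := by simpa using hz
      subst hz'
      simp only [Set.mem_compl_iff, Set.mem_singleton_iff] at ha hb
      exact iff_of_true (hadj a ha) (hadj b hb)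
    obtain ⟨a, b, hax, hbx, hab⟩ := htwo
    rcases hprime _ hmod with h' | h' | ⟨v, h'⟩
    · have : a ∈ ({x}ᶜ : Set V) := hax
      rw [h'] at this
      exact this
    · have : x ∈ ({x}ᶜ : Set V) := h' ▸ Set.mem_univ x
      exact this rfl
    · have ha' : a ∈ ({x}ᶜ : Set V) := hax
      have hb' : b ∈ ({x}ᶜ : Set V) := hbx
      rw [h'] at ha' hb'
      exact hab (ha'.trans hb'.symm)
  -- pick a farthest vertex maximizing the size of the x-side reachable set
  have : Nonempty V := Fintype.card_pos_iff.mp (by omega)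
  obtain ⟨y₀, -, hy₀⟩ := Finset.exists_mem_eq_sup (Finset.univ : Finset V)
    Finset.univ_nonempty (G.dist x)
  set F : Finset V := Finset.univ.filter (fun v => G.dist x v = k) with hFdef
  have hFne : F.Nonempty :=
    ⟨y₀, by simp only [hFdef, Finset.mem_filter, Finset.mem_univ, true_and]; exact hy₀.symm⟩
  obtain ⟨y, hyF, hymax⟩ := F.exists_max_image (fun v => (BSet G x v).ncard) hFne
  have hyd : G.dist x y = k := by simpa [hFdef] using hyF
  have hmaxall : ∀ v, G.dist x v = k → (BSet G x v).ncard ≤ (BSet G x y).ncard :=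
    fun v hv => hymax v (by simp [hFdef, hv])
  have hxny : x ∉ closedNbhd G y := by
    rw [mem_closedNbhd_iff]
    rintro (h | h)
    · rw [h, SimpleGraph.dist_self] at hyd; omega
    · have : G.dist x y ≤ 1 :=
        SimpleGraph.dist_le (SimpleGraph.Walk.cons h.symm SimpleGraph.Walk.nil)
      omega
  have hxB : x ∈ BSet G x y := by
    refine ⟨SimpleGraph.Walk.nil, ?_⟩
    intro z hz
    simp only [SimpleGraph.Walk.support_nil, List.mem_singleton] at hz
    subst hz; exact hxny
  refine ⟨y, ?_, hyd⟩
  have hcover : ∀ z, z ∉ closedNbhd G y → z ∈ BSet G x y := by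
    by_contra hcov
    push_neg at hcov
    obtain ⟨z₀, hz₀n, hz₀b⟩ := hcov
    set B := BSet G x y with hB
    set Y : Set V := {z | G.dist x z = k ∧ BSet G x z = B} with hYdef
    have hyY : y ∈ Y := ⟨hyd, rfl⟩
    have hclosure : ∀ z ∈ Y, ∀ v, v ∉ closedNbhd G z → v ∉ B → v ∈ Y := by
      rintro z ⟨hzd, hzB⟩ v hv1 hv2
      have hv2' : v ∉ BSet G x z := by rw [hzB]; exact hv2
      have hdv : G.dist x v = k :=
        le_antisymm (hdistle v) (hzd ▸ dist_lb hG hv1 hv2')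
      have hsub : B ⊆ BSet G x v := by
        rw [← hzB]; exact bset_mono hv1 hv2'
      have heq : B = BSet G x v :=
        Set.eq_of_subset_of_ncard_le hsub (hmaxall v hdv) (Set.toFinite _)
      exact ⟨hdv, heq.symm⟩
    have hYnotB : ∀ z ∈ Y, z ∉ B := by
      intro z hz hzb
      rw [← hz.2] at hzb
      exact bset_not_nbhd hzb (mem_closedNbhd_self G z)
    have hYnotadjB : ∀ z ∈ Y, ∀ a ∈ B, ¬ G.Adj z a := by
      intro z hz a ha hadj
      rw [← hz.2] at ha
      exact bset_not_nbhd ha (mem_closedNbhd_of_adj hadj)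
    have hmodY : IsModuleSet G Y := by
      intro v hv a ha b hb
      by_cases hvB : v ∈ B
      · refine iff_of_false ?_ ?_
        · exact fun h => hYnotadjB a ha v hvB h.symm
        · exact fun h => hYnotadjB b hb v hvB h.symm
      · have hall : ∀ c ∈ Y, G.Adj v c := by
          intro c hc
          by_contra hnadj
          have hvc : v ≠ c := fun e => hv (e ▸ hc)
          have hvcn : v ∉ closedNbhd G c := by
            rw [mem_closedNbhd_iff]
            rintro (h | h)
            · exact hvc h
            · exact hnadj h.symm
          exact hv (hclosure c hc v hvcn hvB)
        exact iff_of_true (hall a ha) (hall b hb)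
    have hz₀Y : z₀ ∈ Y := hclosure y hyY z₀ hz₀n hz₀b
    have hz₀y : z₀ ≠ y := fun e => hz₀n (e ▸ mem_closedNbhd_self G y)
    have hxY : x ∉ Y := fun h => hYnotB x h hxB
    rcases hprime Y hmodY with h' | h' | ⟨v, h'⟩
    · rw [h'] at hyY; exact hyY
    · exact hxY (h' ▸ Set.mem_univ x)
    · rw [h'] at hyY hz₀Y
      exact hz₀y (hz₀Y.trans hyY.symm)
  rintro ⟨u, hu⟩ ⟨v, hv⟩
  obtain ⟨pu, hpu⟩ := hcover u hu
  obtain ⟨pv, hpv⟩ := hcover v hv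
  have hq : ∀ z ∈ (pu.reverse.append pv).support, z ∈ (closedNbhd G y)ᶜ := by
    intro z hz
    rw [SimpleGraph.Walk.mem_support_append_iff] at hz
    rcases hz with hz | hz
    · rw [SimpleGraph.Walk.support_reverse, List.mem_reverse] at hz
      exact hpu z hz
    · exact hpv z hz
  exact induce_reachable (pu.reverse.append pv) hq hu hv
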